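/- Let ρ be a law-invariant functional on bounded real random variables that is additive for independent random variables (ρ(X̃ + Ỹ) = ρ(X̃) + ρ(Ỹ) whenever X̃, Ỹ are independent), positively homogeneous (ρ(αX̃) = αρ(X̃) for α ≥ 0), that equals the identity on constants (ρ(c) = c), and that is continuous with respect to the Wasserstein-1 metric on laws. Then ρ coincides with the expectation: ρ(X̃) = E(X̃) for every bounded random variable X̃. -/

import Mathlib

open MeasureTheory ProbabilityTheory

/-- A bounded random variable. -/
def Bdd {Ω : Type*} (X : Ω → ℝ) : Prop := ∃ M : ℝ, ∀ ω, |X ω| ≤ M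

/-- The (lower) quantile function of a law on `ℝ`. -/
noncomputable def quantile (μ : Measure ℝ) (p : ℝ) : ℝ :=
  sInf {x : ℝ | p ≤ ProbabilityTheory.cdf μ x}

/-- The Wasserstein-1 distance between two laws on `ℝ`, via quantile functions. -/
noncomputable def W1 (μ ν : Measure ℝ) : ℝ :=
  ∫ u in Set.Ioo (0:ℝ) 1, |quantile μ u - quantile ν u|

section Aux

lemma quantile_le_of {μ : Measure ℝ} {p b a₀ : ℝ} (h0 : cdf μ a₀ < p)
    (hb : p ≤ cdf μ b) : quantile μ p ≤ b := by
  refine csInf_le ⟨a₀, fun x hx => ?_⟩ hb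
  exact le_of_not_gt fun h => absurd hx (not_le.2 (lt_of_le_of_lt (monotone_cdf μ h.le) h0))

lemma le_quantile_of {μ : Measure ℝ} {p b b₀ : ℝ} (hne : p ≤ cdf μ b₀)
    (hb : cdf μ b < p) : b ≤ quantile μ p := by
  refine le_csInf ⟨b₀, hne⟩ fun x hx => ?_
  exact le_of_not_gt fun h => absurd hx (not_le.2 (lt_of_le_of_lt (monotone_cdf μ h.le) hb))

lemma quantile_mono_of {μ : Measure ℝ} {p q a₀ b₀ : ℝ} (hpq : p ≤ q)
    (h0 : cdf μ a₀ < p) (h1 : q ≤ cdf μ b₀) : quantile μ p ≤ quantile μ q := by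
  refine csInf_le_csInf ⟨a₀, fun x hx => ?_⟩ ⟨b₀, h1⟩ (fun x hx => le_trans hpq hx)
  exact le_of_not_gt fun h => absurd hx (not_le.2 (lt_of_le_of_lt (monotone_cdf μ h.le) h0))

lemma cdf_dirac (c x : ℝ) : cdf (Measure.dirac c) x = if c ≤ x then 1 else 0 := by
  rw [cdf_eq_real, measureReal_def, Measure.dirac_apply' _ measurableSet_Iic]
  by_cases h : c ≤ x <;> simp [Set.indicator, Set.mem_Iic, h]

lemma quantile_dirac {c p : ℝ} (h0 : 0 < p) (h1 : p ≤ 1) :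
    quantile (Measure.dirac c) p = c := by
  have hset : {x : ℝ | p ≤ cdf (Measure.dirac c) x} = Set.Ici c := by
    ext x
    rw [Set.mem_setOf_eq, cdf_dirac]
    by_cases h : c ≤ x <;> simp [h, h1, not_le.2 h0, Set.mem_Ici]
  rw [quantile, hset, csInf_Ici]

end Aux

/-- A law-invariant functional on bounded real random variables
(over a rich enough probability space) that is additive for independent
variables, positively homogeneous, equal to the identity on constants, and
Wasserstein-1 continuous, coincides with the expectation. -/
theorem stmt8 {Ω : Type*} [MeasureSpace Ω] [IsProbabilityMeasure (volume : Measure Ω)]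
    (ρ : (Ω → ℝ) → ℝ)
    (hlaw : ∀ X Y : Ω → ℝ, Bdd X → Bdd Y → Measurable X → Measurable Y →
      Measure.map X volume = Measure.map Y volume → ρ X = ρ Y)
    (hadd : ∀ X Y : Ω → ℝ, Bdd X → Bdd Y → Measurable X → Measurable Y →
      IndepFun X Y volume → ρ (fun ω => X ω + Y ω) = ρ X + ρ Y)
    (hhom : ∀ (X : Ω → ℝ) (α : ℝ), Bdd X → Measurable X → 0 ≤ α →
      ρ (fun ω => α * X ω) = α * ρ X)
    (hconst : ∀ c : ℝ, ρ (fun _ => c) = c)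
    (hW1 : ∀ (Y : ℕ → Ω → ℝ) (Z : Ω → ℝ), (∀ n, Bdd (Y n)) → Bdd Z →
      (∀ n, Measurable (Y n)) → Measurable Z →
      Filter.Tendsto
        (fun n => W1 (Measure.map (Y n) volume) (Measure.map Z volume))
        Filter.atTop (nhds 0) →
      Filter.Tendsto (fun n => ρ (Y n)) Filter.atTop (nhds (ρ Z)))
    (hrich : ∀ X : Ω → ℝ, Bdd X → Measurable X →
      ∃ Y : ℕ → Ω → ℝ, (∀ i, Measurable (Y i)) ∧ (∀ i, Bdd (Y i)) ∧
        iIndepFun Y volume ∧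
        ∀ i, Measure.map (Y i) volume = Measure.map X volume)
    (X : Ω → ℝ) (hX : Bdd X) (hXm : Measurable X) :
    ρ X = ∫ ω, X ω := by
  classical
  obtain ⟨M₀, hM₀⟩ := hX
  set M : ℝ := max M₀ 0 with hMdef
  have hM : ∀ ω, |X ω| ≤ M := fun ω => (hM₀ ω).trans (le_max_left _ _)
  have hM0 : 0 ≤ M := le_max_right _ _
  have hX : Bdd X := ⟨M, hM⟩
  obtain ⟨Y, hYm, hYb, hYindep, hYlaw⟩ := hrich X hX hXm
  set c : ℝ := ∫ ω, X ω with hc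
  have hident : ∀ i, IdentDistrib (Y i) X volume volume := fun i =>
    ⟨(hYm i).aemeasurable, hXm.aemeasurable, hYlaw i⟩
  have habsM : MeasurableSet {x : ℝ | M < |x|} :=
    measurableSet_lt measurable_const measurable_abs
  -- a.e. bound on the `Y i`
  have hYae : ∀ i, ∀ᵐ ω, |Y i ω| ≤ M := by
    intro i
    have h1 : volume (Y i ⁻¹' {x | M < |x|}) = volume (X ⁻¹' {x | M < |x|}) := by
      rw [← Measure.map_apply (hYm i) habsM, ← Measure.map_apply hXm habsM, hYlaw i]
    have h2 : X ⁻¹' {x | M < |x|} = ∅ := by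
      ext ω; simp [not_lt.2 (hM ω)]
    rw [ae_iff]
    have : {ω | ¬ |Y i ω| ≤ M} = Y i ⁻¹' {x | M < |x|} := by
      ext ω; simp [not_le]
    rw [this, h1, h2]; simp
  -- partial sums
  set T : ℕ → Ω → ℝ := fun n ω => ∑ i ∈ Finset.range n, Y i ω with hT
  have hTm : ∀ n, Measurable (T n) := fun n => Finset.measurable_sum _ (fun i _ => hYm i)
  choose B hB using hYb
  have hTb : ∀ n, Bdd (T n) := fun n =>
    ⟨∑ i ∈ Finset.range n, B i, fun ω =>
      (Finset.abs_sum_le_sum_abs _ _).trans (Finset.sum_le_sum fun i _ => hB i ω)⟩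
  have hρY : ∀ i, ρ (Y i) = ρ X := fun i =>
    hlaw _ _ ⟨B i, hB i⟩ hX (hYm i) hXm (hYlaw i)
  have hρT : ∀ n, ρ (T n) = n * ρ X := by
    intro n
    induction n with
    | zero =>
      have : T 0 = fun _ => (0:ℝ) := by funext ω; simp [hT]
      rw [this, hconst 0]; simp
    | succ n ih =>
      have hsum : T (n+1) = fun ω => T n ω + Y n ω := by
        funext ω; simp [hT, Finset.sum_range_succ]
      have hind : IndepFun (T n) (Y n) volume := by
        have h := hYindep.indepFun_finsetSum_of_notMem hYm
          (Finset.notMem_range_self (n := n))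
        have he : (∑ j ∈ Finset.range n, Y j) = T n := by
          funext ω; simp [hT, Finset.sum_apply]
        rwa [he] at h
      rw [hsum, hadd _ _ (hTb n) ⟨B n, hB n⟩ (hTm n) (hYm n) hind, ih, hρY n]
      push_cast; ring
  -- scaled averages
  set S : ℕ → Ω → ℝ := fun n ω => ((n:ℝ)+1)⁻¹ * T (n+1) ω with hS
  have hSm : ∀ n, Measurable (S n) := fun n => (hTm (n+1)).const_mul _
  have hSb : ∀ n, Bdd (S n) := by
    intro n
    obtain ⟨C, hC⟩ := hTb (n+1)
    exact ⟨|((n:ℝ)+1)⁻¹| * C, fun ω => by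
      rw [hS]; simp only [abs_mul]
      exact mul_le_mul_of_nonneg_left (hC ω) (abs_nonneg _)⟩
  have hρS : ∀ n, ρ (S n) = ρ X := by
    intro n
    have h := hhom (T (n+1)) ((n:ℝ)+1)⁻¹ (hTb _) (hTm _) (by positivity)
    rw [hS]
    simp only at h ⊢
    rw [h, hρT (n+1)]
    push_cast
    field_simp
  -- a.e. bound on the averages
  have hSae : ∀ n, ∀ᵐ ω, |S n ω| ≤ M := by
    intro n
    filter_upwards [ae_all_iff.2 hYae] with ω hω
    have h1 : |T (n+1) ω| ≤ ((n:ℝ)+1) * M := by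
      calc |T (n+1) ω| ≤ ∑ i ∈ Finset.range (n+1), |Y i ω| :=
            Finset.abs_sum_le_sum_abs _ _
        _ ≤ ∑ _i ∈ Finset.range (n+1), M := Finset.sum_le_sum fun i _ => hω i
        _ = ((n:ℝ)+1) * M := by rw [Finset.sum_const, Finset.card_range, nsmul_eq_mul]; push_cast; ring
    have hpos : (0:ℝ) < (n:ℝ)+1 := by positivity
    rw [hS]
    simp only [abs_mul, abs_of_pos (inv_pos.2 hpos)]
    calc ((n:ℝ)+1)⁻¹ * |T (n+1) ω| ≤ ((n:ℝ)+1)⁻¹ * (((n:ℝ)+1) * M) := by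
          exact mul_le_mul_of_nonneg_left h1 (le_of_lt (inv_pos.2 hpos))
      _ = M := by field_simp
  -- strong law of large numbers
  have hint : Integrable (Y 0) volume := by
    refine ⟨(hYm 0).aestronglyMeasurable, ?_⟩
    exact HasFiniteIntegral.of_bounded (C := B 0) (ae_of_all _ fun ω => by
      rw [Real.norm_eq_abs]; exact hB 0 ω)
  have hpair : Pairwise (Function.onFun (IndepFun · · volume) Y) := fun i j hij =>
    hYindep.indepFun hij
  have hEY : ∫ ω, Y 0 ω = c := (hident 0).integral_eq
  have hLLN := strong_law_ae Y hint hpair (fun i => (hident i).trans (hident 0).symm)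
  have hLLN' : ∀ᵐ ω, Filter.Tendsto (fun n => S n ω) Filter.atTop (nhds c) := by
    filter_upwards [hLLN] with ω hω
    rw [hEY] at hω
    have h2 := hω.comp (Filter.tendsto_add_atTop_nat 1)
    convert h2 using 2 with n
    rw [hS]
    simp only [Function.comp_apply, smul_eq_mul]
    push_cast
    rfl
  -- the laws of the averages
  have hIsProbS : ∀ n, IsProbabilityMeasure (Measure.map (S n) volume) :=
    fun n => Measure.isProbabilityMeasure_map (hSm n).aemeasurable
  have hcdfS : ∀ n x, cdf (Measure.map (S n) volume) x
      = (volume (S n ⁻¹' Set.Iic x)).toReal := by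
    intro n x
    have := hIsProbS n
    rw [cdf_eq_real, measureReal_def, Measure.map_apply (hSm n) measurableSet_Iic]
  have hcdfM : ∀ n, cdf (Measure.map (S n) volume) M = 1 := by
    intro n
    rw [hcdfS]
    have hae : ∀ᵐ ω, ω ∈ S n ⁻¹' Set.Iic M := by
      filter_upwards [hSae n] with ω hω
      exact (abs_le.1 hω).2
    have : volume (S n ⁻¹' Set.Iic M) = volume (Set.univ : Set Ω) :=
      measure_congr (Filter.eventuallyEq_univ.2 hae)
    rw [this, measure_univ]; simp
  have hcdflow : ∀ n x, x < -M → cdf (Measure.map (S n) volume) x = 0 := by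
    intro n x hx
    rw [hcdfS]
    have : volume (S n ⁻¹' Set.Iic x) = 0 := by
      refine measure_mono_null ?_ ((ae_iff.1 (hSae n)))
      intro ω hω
      have h1 : S n ω ≤ x := hω
      have h2 : M < |S n ω| :=
        lt_of_lt_of_le (by linarith : M < -(S n ω)) (neg_le_abs _)
      simp only [Set.mem_setOf_eq, not_le]
      exact h2
    rw [this]; simp
  -- cdf convergence via dominated convergence on indicators
  have hcdf_tendsto : ∀ x : ℝ, x ≠ c →
      Filter.Tendsto (fun n => cdf (Measure.map (S n) volume) x) Filter.atTop
        (nhds (if c ≤ x then 1 else 0)) := by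
    intro x hx
    set g : Ω → ℝ := fun _ => if c ≤ x then 1 else 0 with hg
    have key : Filter.Tendsto
        (fun n => ∫ ω, (S n ⁻¹' Set.Iic x).indicator (fun _ => (1:ℝ)) ω)
        Filter.atTop (nhds (∫ ω, g ω)) := by
      refine tendsto_integral_of_dominated_convergence (fun _ => (1:ℝ))
        (fun n => ?_) (integrable_const _) (fun n => ae_of_all _ fun ω => ?_) ?_
      · exact ((measurable_const.indicator ((hSm n) measurableSet_Iic))).aestronglyMeasurable
      · by_cases h : ω ∈ S n ⁻¹' Set.Iic x <;>
          simp [Set.indicator_apply, h]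
      · filter_upwards [hLLN'] with ω hω
        rcases lt_or_gt_of_ne hx with hlt | hgt
        · -- x < c : indicator tends to 0
          have hev : ∀ᶠ n in Filter.atTop,
              (S n ⁻¹' Set.Iic x).indicator (fun _ => (1:ℝ)) ω = g ω := by
            filter_upwards [hω.eventually_const_lt hlt] with n hn
            have : ω ∉ S n ⁻¹' Set.Iic x := by
              simp only [Set.mem_preimage, Set.mem_Iic, not_le]; exact hn
            simp [Set.indicator_apply, this, hg, not_le.2 hlt]
          exact Filter.Tendsto.congr' (hev.mono fun n h => h.symm) tendsto_const_nhds
        · -- c < x : indicator tends to 1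
          have hev : ∀ᶠ n in Filter.atTop,
              (S n ⁻¹' Set.Iic x).indicator (fun _ => (1:ℝ)) ω = g ω := by
            filter_upwards [hω.eventually_lt_const hgt] with n hn
            have : ω ∈ S n ⁻¹' Set.Iic x := by
              simp only [Set.mem_preimage, Set.mem_Iic]; exact hn.le
            simp [Set.indicator_apply, this, hg, hgt.le]
          exact Filter.Tendsto.congr' (hev.mono fun n h => h.symm) tendsto_const_nhds
    have h1 : ∀ n, ∫ ω, (S n ⁻¹' Set.Iic x).indicator (fun _ => (1:ℝ)) ω
        = cdf (Measure.map (S n) volume) x := by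
      intro n
      rw [hcdfS, integral_indicator_const (1:ℝ) ((hSm n) measurableSet_Iic), measureReal_def, smul_eq_mul, mul_one]
    have h2 : ∫ ω, g ω = if c ≤ x then 1 else 0 := by
      rw [hg]; simp [integral_const]
    rw [← h2]
    exact key.congr h1
  -- quantile convergence for u ∈ (0,1)
  have hq_tendsto : ∀ u ∈ Set.Ioo (0:ℝ) 1,
      Filter.Tendsto (fun n => quantile (Measure.map (S n) volume) u)
        Filter.atTop (nhds c) := by
    rintro u ⟨hu0, hu1⟩
    rw [tendsto_order]
    constructor
    · intro a ha
      set a' := (a + c) / 2 with ha'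
      have ha'1 : a < a' := by rw [ha']; linarith
      have ha'2 : a' < c := by rw [ha']; linarith
      have := hcdf_tendsto a' (ne_of_lt ha'2)
      rw [if_neg (not_le.2 ha'2)] at this
      filter_upwards [this.eventually_lt_const hu0] with n hn
      have hle : a' ≤ quantile (Measure.map (S n) volume) u :=
        le_quantile_of (b₀ := M) (by rw [hcdfM]; exact hu1.le) hn
      exact lt_of_lt_of_le ha'1 hle
    · intro b hb
      set b' := (c + b) / 2 with hb'
      have hb'1 : b' < b := by rw [hb']; linarith
      have hb'2 : c < b' := by rw [hb']; linarith
      have := hcdf_tendsto b' (ne_of_gt hb'2)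
      rw [if_pos hb'2.le] at this
      filter_upwards [this.eventually_const_lt hu1] with n hn
      have hle : quantile (Measure.map (S n) volume) u ≤ b' :=
        quantile_le_of (a₀ := -M - 1) (by rw [hcdflow n _ (by linarith)]; exact hu0) hn.le
      exact lt_of_le_of_lt hle hb'1
  -- quantile bounds for u ∈ (0,1)
  have hq_bdd : ∀ n, ∀ u ∈ Set.Ioo (0:ℝ) 1,
      -M - 1 ≤ quantile (Measure.map (S n) volume) u ∧
      quantile (Measure.map (S n) volume) u ≤ M := by
    rintro n u ⟨hu0, hu1⟩
    constructor
    · exact le_quantile_of (b₀ := M) (by rw [hcdfM]; exact hu1.le)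
        (by rw [hcdflow n _ (by linarith)]; exact hu0)
    · exact quantile_le_of (a₀ := -M - 1)
        (by rw [hcdflow n _ (by linarith)]; exact hu0)
        (by rw [hcdfM]; exact hu1.le)
  have hcM : |c| ≤ M := by
    have := norm_integral_le_of_norm_le_const (μ := volume) (f := X) (C := M)
      (ae_of_all _ fun ω => by rw [Real.norm_eq_abs]; exact hM ω)
    rwa [Real.norm_eq_abs, probReal_univ, mul_one] at this
  -- the limit constant random variable
  have hmapc : Measure.map (fun _ : Ω => c) volume = Measure.dirac c := by
    rw [Measure.map_const]; simp
  -- W1 convergence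
  have hW1conv : Filter.Tendsto
      (fun n => W1 (Measure.map (S n) volume) (Measure.map (fun _ : Ω => c) volume))
      Filter.atTop (nhds 0) := by
    have hW1eq : ∀ n, W1 (Measure.map (S n) volume) (Measure.map (fun _ : Ω => c) volume)
        = ∫ u in Set.Ioo (0:ℝ) 1, |quantile (Measure.map (S n) volume) u - c| := by
      intro n
      rw [hmapc, W1]
      refine setIntegral_congr_fun measurableSet_Ioo fun u hu => ?_
      rw [quantile_dirac hu.1 hu.2.le]
    have key : Filter.Tendsto
        (fun n => ∫ u in Set.Ioo (0:ℝ) 1, |quantile (Measure.map (S n) volume) u - c|)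
        Filter.atTop (nhds (∫ _u in Set.Ioo (0:ℝ) 1, (0:ℝ))) := by
      refine tendsto_integral_of_dominated_convergence (fun _ => 2*M+1)
        (fun n => ?_) (integrable_const _) (fun n => ?_) ?_
      · -- measurability
        have hmono : MonotoneOn (quantile (Measure.map (S n) volume)) (Set.Ioo 0 1) := by
          rintro p ⟨hp0, hp1⟩ q ⟨hq0, hq1⟩ hpq
          exact quantile_mono_of (a₀ := -M - 1) (b₀ := M) hpq
            (by rw [hcdflow n _ (by linarith)]; exact hp0)
            (by rw [hcdfM]; exact hq1.le)
        exact (measurable_abs.comp_aemeasurable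
          ((aemeasurable_restrict_of_monotoneOn measurableSet_Ioo hmono).sub
            aemeasurable_const)).aestronglyMeasurable
      · -- bound
        rw [ae_restrict_iff' measurableSet_Ioo]
        refine ae_of_all _ fun u hu => ?_
        obtain ⟨h1, h2⟩ := hq_bdd n u hu
        rw [Real.norm_eq_abs, abs_abs, abs_sub_le_iff]
        obtain ⟨hc1, hc2⟩ := abs_le.1 hcM
        constructor
        · beta_reduce
          linarith
        · beta_reduce
          linarith
      · -- pointwise limit
        rw [ae_restrict_iff' measurableSet_Ioo]
        refine ae_of_all _ fun u hu => ?_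
        have := ((hq_tendsto u hu).sub_const c).abs
        simpa using this
    have : (∫ _u in Set.Ioo (0:ℝ) 1, (0:ℝ)) = 0 := by simp
    rw [this] at key
    exact Filter.Tendsto.congr (fun n => (hW1eq n).symm) key
  -- conclude
  have hfinal := hW1 S (fun _ => c) hSb ⟨|c|, fun ω => le_refl _⟩ hSm measurable_const
    hW1conv
  rw [hconst c] at hfinal
  have : Filter.Tendsto (fun _ : ℕ => ρ X) Filter.atTop (nhds c) := by
    refine hfinal.congr fun n => hρS n
  exact tendsto_nhds_unique tendsto_const_nhds this
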